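/- Let Φ be an irreducible reduced root system with base Δ and let β be an element of the root lattice with β = λ − wλ for some dominant weight λ and Weyl group element w. If β ≠ 0 and β = Σ_{α∈Δ} n_α α, then the set S = {α ∈ Δ : n_α ≠ 0} has the property that for any simple root γ ∉ S adjacent in the Dynkin diagram to some γ' ∈ S, the coefficient of the fundamental weight ω_γ in β is negative. (Equivalently: the support of λ − wλ in the simple roots cannot have a boundary simple root on which β has nonnegative fundamental-weight coefficient.) -/

import Mathlib

open scoped RealInnerProductSpace

noncomputable section

variable {E : Type*} [NormedAddCommGroup E] [InnerProductSpace ℝ E]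

/-- The pairing `⟨x, α∨⟩ = 2(x,α)/(α,α)`. -/
def cpair (x α : E) : ℝ := 2 * ⟪x, α⟫ / ⟪α, α⟫

/-- Reflection in the hyperplane orthogonal to `α`. -/
def wrefl (α x : E) : E := x - cpair x α • α

/-- An irreducible reduced root system with a chosen base `simple : Fin ℓ → E`. -/
structure RootSystemData (ℓ : ℕ) (E : Type*) [NormedAddCommGroup E]
    [InnerProductSpace ℝ E] where
  roots : Finset E
  simple : Fin ℓ → E
  simple_mem : ∀ i, simple i ∈ roots
  root_ne_zero : ∀ α ∈ roots, α ≠ 0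
  reduced : ∀ α ∈ roots, (2 : ℝ) • α ∉ roots
  cpair_int : ∀ α ∈ roots, ∀ β ∈ roots, ∃ n : ℤ, cpair β α = (n : ℝ)
  reflect_mem : ∀ α ∈ roots, ∀ β ∈ roots, wrefl α β ∈ roots
  simple_indep : LinearIndependent ℝ simple
  root_decomp : ∀ α ∈ roots,
    (∃ c : Fin ℓ → ℕ, α = ∑ i, (c i : ℝ) • simple i) ∨
    (∃ c : Fin ℓ → ℕ, α = -∑ i, (c i : ℝ) • simple i)
  irred : ∀ S : Finset (Fin ℓ), S.Nonempty →
    (∀ i ∈ S, ∀ j ∉ S, ⟪simple i, simple j⟫ = 0) → S = Finset.univ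

namespace RootSystemData

variable {ℓ : ℕ} (R : RootSystemData ℓ E)

/-- Integral weights. -/
def IsIntegral (x : E) : Prop := ∀ α ∈ R.roots, ∃ n : ℤ, cpair x α = (n : ℝ)

/-- Dominant (integral) weights. -/
def IsDominant (x : E) : Prop :=
  R.IsIntegral x ∧ ∀ i, 0 ≤ cpair x (R.simple i)

/-- The dominant order: `R.wle μ λ` means `μ ≤ λ`, i.e. `λ - μ` is a nonnegative
integer combination of the simple roots. -/
def wle (μ lam : E) : Prop :=
  ∃ c : Fin ℓ → ℕ, lam - μ = ∑ i, (c i : ℝ) • R.simple i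

/-- Minuscule weights: nonzero dominant weights all of whose pairings with roots
lie in `{0, 1, -1}`. -/
def IsMinuscule (x : E) : Prop :=
  R.IsDominant x ∧ x ≠ 0 ∧
  ∀ α ∈ R.roots, cpair x α = 0 ∨ cpair x α = 1 ∨ cpair x α = -1

/-- `y` lies in the Weyl group orbit of `x`. -/
def InWeylOrbit (x y : E) : Prop :=
  ∃ l : List E, (∀ α ∈ l, α ∈ R.roots) ∧ y = l.foldr wrefl x

/-- `R.IsDualOf μ λ` expresses `μ = -w₀ λ`: `μ` is the dominant element of the
Weyl orbit of `-λ`. -/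
def IsDualOf (μ lam : E) : Prop := R.IsDominant μ ∧ R.InWeylOrbit (-lam) μ

/-- Low triples of dominant weights. -/
def LowTriple (lam mu nu : E) : Prop :=
  R.IsDominant lam ∧ R.IsDominant mu ∧ R.IsDominant nu ∧
  (∀ lam' mu' : E, R.IsDominant lam' → R.IsDominant mu' →
    R.wle lam' lam → R.wle mu' mu → R.wle nu (lam' + mu') → lam' = lam ∧ mu' = mu) ∧
  R.wle (nu + ∑ i, R.simple i) (lam + mu)

/-- Covering relation in the poset of dominant weights. -/
def Covers (lam mu : E) : Prop :=
  R.IsDominant lam ∧ R.IsDominant mu ∧ R.wle mu lam ∧ mu ≠ lam ∧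
  ∀ η, R.IsDominant η → R.wle mu η → R.wle η lam → η = mu ∨ η = lam

/-- A root of the subsystem `Φ_I` generated by the simple roots indexed by `I`. -/
def IsRootOf (I : Finset (Fin ℓ)) (β : E) : Prop :=
  β ∈ R.roots ∧ ∃ c : Fin ℓ → ℤ, (∀ i, c i ≠ 0 → i ∈ I) ∧
    β = ∑ i, (c i : ℝ) • R.simple i

/-- A short root of `Φ_I`. -/
def IsShortRootOf (I : Finset (Fin ℓ)) (β : E) : Prop :=
  R.IsRootOf I β ∧ ∀ γ, R.IsRootOf I γ → ⟪β, β⟫ ≤ ⟪γ, γ⟫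

/-- `θ` is the highest short root of `Φ_I`. -/
def IsHighestShortRoot (I : Finset (Fin ℓ)) (θ : E) : Prop :=
  R.IsShortRootOf I θ ∧ ∀ γ, R.IsShortRootOf I γ → R.wle γ θ

/-- `I` indexes a connected (i.e. irreducible) subdiagram of the Dynkin diagram. -/
def Connected (I : Finset (Fin ℓ)) : Prop :=
  I.Nonempty ∧ ∀ S ⊆ I, S.Nonempty →
    (∀ i ∈ S, ∀ j ∈ I, j ∉ S → ⟪R.simple i, R.simple j⟫ = 0) → S = I

/-- `I` is of type A: the Cartan matrix of `Φ_I` is that of a type `A` chain. -/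
def IsTypeASub (I : Finset (Fin ℓ)) : Prop :=
  ∃ e : Fin I.card ≃ {i // i ∈ I}, ∀ a b : Fin I.card,
    cpair (R.simple (e b).1) (R.simple (e a).1) =
      if a = b then 2
      else if (a : ℕ) + 1 = (b : ℕ) ∨ (b : ℕ) + 1 = (a : ℕ) then -1 else 0

/-- The subdiagram indexed by `I` is simply laced. -/
def SimplyLaced (I : Finset (Fin ℓ)) : Prop :=
  ∀ i ∈ I, ∀ j ∈ I, i ≠ j →
    cpair (R.simple i) (R.simple j) = 0 ∨ cpair (R.simple i) (R.simple j) = -1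

end RootSystemData

section Aux
open Finset

lemma cpair_add_left (x y α : E) : cpair (x + y) α = cpair x α + cpair y α := by
  unfold cpair; rw [inner_add_left]; ring

lemma cpair_smul_left (c : ℝ) (x α : E) : cpair (c • x) α = c * cpair x α := by
  unfold cpair; rw [real_inner_smul_left]; ring

lemma cpair_sub_left (x y α : E) : cpair (x - y) α = cpair x α - cpair y α := by
  unfold cpair; rw [inner_sub_left]; ring

lemma cpair_neg_right (x α : E) : cpair x (-α) = -cpair x α := by
  unfold cpair; rw [inner_neg_right, inner_neg_neg]; ring

lemma cpair_zero_left (α : E) : cpair 0 α = 0 := by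
  unfold cpair; rw [inner_zero_left]; ring

lemma cpair_self (α : E) (hα : α ≠ 0) : cpair α α = 2 := by
  unfold cpair
  have : ⟪α, α⟫ ≠ 0 := fun h => hα ((inner_self_eq_zero (𝕜 := ℝ)).mp h)
  field_simp

lemma wrefl_zero (x : E) : wrefl 0 x = x := by
  unfold wrefl; rw [smul_zero]; abel

lemma wrefl_neg (α x : E) : wrefl (-α) x = wrefl α x := by
  unfold wrefl; rw [cpair_neg_right, neg_smul, smul_neg, neg_neg]

lemma wrefl_add (α x y : E) : wrefl α (x + y) = wrefl α x + wrefl α y := by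
  unfold wrefl; rw [cpair_add_left, add_smul]; abel

lemma wrefl_smul (α : E) (c : ℝ) (x : E) : wrefl α (c • x) = c • wrefl α x := by
  unfold wrefl; rw [cpair_smul_left, mul_smul, smul_sub]

lemma wrefl_sub (α x y : E) : wrefl α (x - y) = wrefl α x - wrefl α y := by
  unfold wrefl; rw [cpair_sub_left, sub_smul]; abel

lemma wrefl_zero_right (α : E) : wrefl α 0 = 0 := by
  unfold wrefl; rw [cpair_zero_left, zero_smul]; abel

lemma inner_wrefl_wrefl (α x y : E) : ⟪wrefl α x, wrefl α y⟫ = ⟪x, y⟫ := by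
  rcases eq_or_ne α 0 with h | h
  · rw [h, wrefl_zero, wrefl_zero]
  · have hA : ⟪α, α⟫ ≠ 0 := by
      exact fun hz => h ((inner_self_eq_zero (𝕜 := ℝ)).mp hz)
    unfold wrefl cpair
    simp only [inner_sub_left, inner_sub_right, real_inner_smul_left,
      real_inner_smul_right, real_inner_comm α x, real_inner_comm α y]
    field_simp
    ring

end Aux
section Aux2

lemma inner_self_ne_zero' {α : E} (h : α ≠ 0) : ⟪α, α⟫ ≠ 0 :=
  fun hz => h ((inner_self_eq_zero (𝕜 := ℝ)).mp hz)

lemma cpair_wrefl_wrefl (α x y : E) : cpair (wrefl α x) (wrefl α y) = cpair x y := by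
  unfold cpair; rw [inner_wrefl_wrefl, inner_wrefl_wrefl]

lemma wrefl_wrefl (α x : E) : wrefl α (wrefl α x) = x := by
  rcases eq_or_ne α 0 with h | h
  · rw [h, wrefl_zero, wrefl_zero]
  · have hA := inner_self_ne_zero' h
    have hc : cpair (wrefl α x) α = -cpair x α := by
      unfold wrefl cpair
      rw [inner_sub_left, real_inner_smul_left]
      field_simp
      ring
    calc wrefl α (wrefl α x) = wrefl α x - cpair (wrefl α x) α • α := rfl
      _ = (x - cpair x α • α) - (-cpair x α) • α := by rw [hc]; rfl
      _ = x := by rw [neg_smul]; abel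

lemma wrefl_conj (γ β x : E) : wrefl γ (wrefl β x) = wrefl (wrefl γ β) (wrefl γ x) := by
  have h1 : wrefl (wrefl γ β) (wrefl γ x) = wrefl γ x - cpair x β • wrefl γ β := by
    rw [wrefl, cpair_wrefl_wrefl]
  have h2 : wrefl γ (wrefl β x) = wrefl γ x - cpair x β • wrefl γ β := by
    have h : wrefl β x = x - cpair x β • β := rfl
    rw [h, wrefl_sub, wrefl_smul]
  rw [h1, h2]

lemma wrefl_apply_self (α : E) (h : α ≠ 0) : wrefl α α = -α := by
  rw [wrefl, cpair_self α h, two_smul]; abel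

end Aux2
namespace RootSystemData
open Finset
variable {ℓ : ℕ} (R : RootSystemData ℓ E)

lemma coeff_eq {a b : Fin ℓ → ℝ} (h : ∑ i, a i • R.simple i = ∑ i, b i • R.simple i) :
    a = b := by
  funext i
  have h0 : ∑ i, (a i - b i) • R.simple i = 0 := by
    simp only [sub_smul, Finset.sum_sub_distrib, h, sub_self]
  have := linearIndependent_iff'.mp R.simple_indep Finset.univ (fun i => a i - b i) h0 i
    (mem_univ i)
  simpa [sub_eq_zero] using this

lemma simple_ne_zero (i : Fin ℓ) : R.simple i ≠ 0 :=
  R.root_ne_zero _ (R.simple_mem i)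

lemma delta_sum (j : Fin ℓ) :
    ∑ i, ((if i = j then (1:ℝ) else 0)) • R.simple i = R.simple j := by
  simp [ite_smul, Finset.sum_ite_eq']

def IsPos (β : E) : Prop :=
  β ∈ R.roots ∧ ∃ c : Fin ℓ → ℕ, β = ∑ i, (c i : ℝ) • R.simple i

def IsNeg (β : E) : Prop :=
  β ∈ R.roots ∧ ∃ c : Fin ℓ → ℕ, β = -∑ i, (c i : ℝ) • R.simple i

lemma pos_or_neg {β : E} (h : β ∈ R.roots) : R.IsPos β ∨ R.IsNeg β := by
  rcases R.root_decomp β h with ⟨c, hc⟩ | ⟨c, hc⟩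
  · exact Or.inl ⟨h, c, hc⟩
  · exact Or.inr ⟨h, c, hc⟩

lemma not_pos_neg {β : E} (hp : R.IsPos β) (hn : R.IsNeg β) : False := by
  obtain ⟨hm, c, hc⟩ := hp
  obtain ⟨-, d, hd⟩ := hn
  have hsum : ∑ i, ((c i : ℝ) + (d i : ℝ)) • R.simple i = ∑ i, (0:ℝ) • R.simple i := by
    simp only [add_smul, Finset.sum_add_distrib, zero_smul, Finset.sum_const_zero]
    rw [← hc]
    have : ∑ i, (d i : ℝ) • R.simple i = -β := by rw [hd]; abel
    rw [this]; abel
  have hz := congrFun (R.coeff_eq hsum)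
  have hβ : β = 0 := by
    rw [hc]
    apply Finset.sum_eq_zero
    intro i _
    have h1 := hz i
    have h2 : (c i : ℝ) = 0 := by
      have := Nat.cast_nonneg (α := ℝ) (c i)
      have := Nat.cast_nonneg (α := ℝ) (d i)
      linarith
    rw [h2, zero_smul]
  exact R.root_ne_zero β hm hβ

lemma isPos_simple (j : Fin ℓ) : R.IsPos (R.simple j) := by
  refine ⟨R.simple_mem j, fun i => if i = j then 1 else 0, ?_⟩
  rw [← R.delta_sum j]
  apply Finset.sum_congr rfl
  intro i _
  split <;> simp_all

lemma neg_mem {β : E} (h : β ∈ R.roots) : -β ∈ R.roots := by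
  have := R.reflect_mem β h β h
  rwa [wrefl_apply_self β (R.root_ne_zero β h)] at this

lemma isNeg_neg {β : E} (h : R.IsPos β) : R.IsNeg (-β) := by
  obtain ⟨hm, c, hc⟩ := h
  exact ⟨R.neg_mem hm, c, by rw [hc]⟩

lemma isPos_neg {β : E} (h : R.IsNeg β) : R.IsPos (-β) := by
  obtain ⟨hm, c, hc⟩ := h
  exact ⟨R.neg_mem hm, c, by rw [hc, neg_neg]⟩

/-- A root that is a difference of two distinct simple roots yields a contradiction. -/
lemma sub_simple_not_root {i j : Fin ℓ} (hij : i ≠ j)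
    (h : R.simple j - R.simple i ∈ R.roots) : False := by
  have key : ∀ a b : Fin ℓ, a ≠ b → ∀ c : Fin ℓ → ℕ,
      R.simple a - R.simple b ≠ ∑ k, (c k : ℝ) • R.simple k := by
    intro a b hab c hc
    have hL : ∑ k, (((if k = a then (1:ℝ) else 0) - (if k = b then 1 else 0))) • R.simple k
        = R.simple a - R.simple b := by
      simp only [sub_smul, Finset.sum_sub_distrib, R.delta_sum]
    have hthis := congrFun (R.coeff_eq (hL.trans hc)) b
    simp only [if_neg (fun hba : b = a => hab hba.symm), if_pos rfl] at hthis
    norm_num at hthis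
    have hnn := Nat.cast_nonneg (α := ℝ) (c b)
    rw [← hthis] at hnn
    linarith
  rcases R.pos_or_neg h with ⟨-, c, hc⟩ | ⟨-, c, hc⟩
  · exact key j i hij.symm c hc
  · refine key i j hij c ?_
    have : R.simple i - R.simple j = -(R.simple j - R.simple i) := by abel
    rw [this, hc, neg_neg]

end RootSystemData
namespace RootSystemData
open Finset
variable {ℓ : ℕ} (R : RootSystemData ℓ E)

lemma inner_self_pos'' {α : E} (h : α ≠ 0) : 0 < ⟪α, α⟫ :=
  lt_of_le_of_ne real_inner_self_nonneg (Ne.symm (inner_self_ne_zero' h))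

lemma inner_simple_self_pos (i : Fin ℓ) : 0 < ⟪R.simple i, R.simple i⟫ :=
  inner_self_pos'' (R.simple_ne_zero i)

lemma inner_simple_nonpos {i j : Fin ℓ} (hij : i ≠ j) :
    ⟪R.simple i, R.simple j⟫ ≤ 0 := by
  by_contra hpos
  push_neg at hpos
  set x := R.simple i with hx
  set y := R.simple j with hy
  have hxr := R.simple_mem i
  have hyr := R.simple_mem j
  have hxx := R.inner_simple_self_pos i
  have hyy := R.inner_simple_self_pos j
  -- strict Cauchy-Schwarz
  have hncol : ‖y‖ • x ≠ ‖x‖ • y := by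
    intro hcol
    have h0 : ∑ k, ((fun k => if k = i then ‖y‖ else (0:ℝ)) k) • R.simple k
        = ∑ k, ((fun k => if k = j then ‖x‖ else (0:ℝ)) k) • R.simple k := by
      simp only [ite_smul, zero_smul, Finset.sum_ite_eq', Finset.mem_univ, if_pos]
      exact hcol
    have hii := congrFun (R.coeff_eq h0) i
    simp only [if_pos rfl, if_neg hij] at hii
    exact R.simple_ne_zero j (by simpa [hy] using norm_eq_zero.mp hii)
  have hCS : ⟪x, y⟫ < ‖x‖ * ‖y‖ := inner_lt_norm_mul_iff_real.mpr hncol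
  have hsq : ⟪x, y⟫ * ⟪x, y⟫ < ⟪x, x⟫ * ⟪y, y⟫ := by
    rw [real_inner_self_eq_norm_mul_norm, real_inner_self_eq_norm_mul_norm]
    nlinarith [hpos, hCS]
  obtain ⟨m, hm⟩ := R.cpair_int y hyr x hxr
  obtain ⟨n, hn⟩ := R.cpair_int x hxr y hyr
  -- cpair x y = 2⟪x,y⟫/⟪y,y⟫ = m, cpair y x = n
  have hyx : ⟪y, x⟫ = ⟪x, y⟫ := real_inner_comm x y
  have hmpos : (0:ℝ) < m := by
    rw [← hm]; unfold cpair; exact div_pos (by linarith) hyy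
  have hnpos : (0:ℝ) < n := by
    rw [← hn]; unfold cpair; rw [hyx]; exact div_pos (by linarith) hxx
  have hprod : (m : ℝ) * n < 4 := by
    rw [← hm, ← hn]
    unfold cpair
    rw [hyx, div_mul_div_comm, div_lt_iff₀ (by exact mul_pos hyy hxx)]
    nlinarith [hsq]
  have hm1 : 1 ≤ m := by exact_mod_cast hmpos
  have hn1 : 1 ≤ n := by exact_mod_cast hnpos
  have hmn4 : m * n < 4 := by exact_mod_cast hprod
  have : m = 1 ∨ n = 1 := by
    by_contra hcon
    push_neg at hcon
    have h2m : 2 ≤ m := by omega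
    have h2n : 2 ≤ n := by omega
    have h4 : 4 ≤ m * n := by nlinarith
    omega
  rcases this with h1 | h1
  · -- cpair x y = 1, so wrefl y x = x - y ∈ roots
    have : wrefl y x = x - y := by
      unfold wrefl
      rw [hm, h1]
      push_cast
      rw [one_smul]
    have hr : x - y ∈ R.roots := this ▸ R.reflect_mem y hyr x hxr
    exact R.sub_simple_not_root hij.symm (by rwa [hx, hy] at hr)
  · have : wrefl x y = y - x := by
      unfold wrefl
      rw [hn, h1]
      push_cast
      rw [one_smul]
    have hr : y - x ∈ R.roots := this ▸ R.reflect_mem x hxr y hyr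
    exact R.sub_simple_not_root hij (by rwa [hx, hy] at hr)

lemma cpair_simple_nonpos {i j : Fin ℓ} (hij : i ≠ j) :
    cpair (R.simple i) (R.simple j) ≤ 0 := by
  unfold cpair
  have h1 := R.inner_simple_nonpos hij
  have h2 := R.inner_simple_self_pos j
  have : 2 * ⟪R.simple i, R.simple j⟫ ≤ 0 := by linarith
  exact div_nonpos_of_nonpos_of_nonneg this (le_of_lt h2)

lemma cpair_simple_neg {i j : Fin ℓ} (hij : i ≠ j)
    (hadj : ⟪R.simple i, R.simple j⟫ ≠ 0) :
    cpair (R.simple i) (R.simple j) < 0 := by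
  have h1 := lt_of_le_of_ne (R.inner_simple_nonpos hij) hadj
  have h2 := R.inner_simple_self_pos j
  unfold cpair
  apply div_neg_of_neg_of_pos _ h2
  linarith

end RootSystemData
namespace RootSystemData
open Finset
variable {ℓ : ℕ} (R : RootSystemData ℓ E)

lemma pos_has_offdiag_coeff {β : E} {c : Fin ℓ → ℕ} (j : Fin ℓ)
    (hβr : β ∈ R.roots) (hc : β = ∑ i, (c i : ℝ) • R.simple i)
    (hne : β ≠ R.simple j) : ∃ k, k ≠ j ∧ c k ≠ 0 := by
  by_contra hall
  push_neg at hall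
  have hβj : β = ((c j : ℝ)) • R.simple j := by
    rw [hc, Finset.sum_eq_single j]
    · intro k _ hk
      rw [hall k hk]; simp
    · intro h; exact absurd (mem_univ j) h
  rcases Nat.lt_or_ge (c j) 2 with hlt | hge
  · have h01 : c j = 0 ∨ c j = 1 := by omega
    rcases h01 with h | h
    · exact R.root_ne_zero β hβr (by rw [hβj, h]; simp)
    · exact hne (by rw [hβj, h]; simp)
  · rcases Nat.lt_or_ge (c j) 3 with h2 | h3
    · have h2' : c j = 2 := by omega
      have : β = (2:ℝ) • R.simple j := by rw [hβj, h2']; norm_num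
      exact R.reduced _ (R.simple_mem j) (this ▸ hβr)
    · obtain ⟨n, hn⟩ := R.cpair_int β hβr (R.simple j) (R.simple_mem j)
      have hA := R.inner_simple_self_pos j
      have hcj : (0:ℝ) < (c j : ℝ) := by
        have : c j ≠ 0 := by omega
        exact_mod_cast Nat.pos_of_ne_zero this
      have hval : cpair (R.simple j) β = 2 / (c j : ℝ) := by
        unfold cpair
        rw [hβj, real_inner_smul_right, real_inner_smul_left, real_inner_smul_right]
        field_simp
      rw [hval] at hn
      have hc3 : (3:ℝ) ≤ (c j : ℝ) := by exact_mod_cast h3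
      have h1 : (0:ℝ) < 2 / (c j : ℝ) := by positivity
      have h2 : (2:ℝ) / (c j : ℝ) < 1 := by
        rw [div_lt_one (by linarith)]; linarith
      rw [hn] at h1 h2
      have : (1:ℤ) ≤ n := by exact_mod_cast h1
      have : (n:ℝ) < 1 := h2
      have : n < 1 := by exact_mod_cast this
      omega

lemma isPos_wrefl_simple {β : E} (j : Fin ℓ) (hp : R.IsPos β) (hne : β ≠ R.simple j) :
    R.IsPos (wrefl (R.simple j) β) ∧ wrefl (R.simple j) β ≠ R.simple j := by
  obtain ⟨hβr, c, hc⟩ := hp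
  obtain ⟨k, hkj, hck⟩ := R.pos_has_offdiag_coeff j hβr hc hne
  have hrt : wrefl (R.simple j) β ∈ R.roots := R.reflect_mem _ (R.simple_mem j) _ hβr
  constructor
  · rcases R.pos_or_neg hrt with h | h
    · exact h
    · exfalso
      obtain ⟨-, d, hd⟩ := h
      set m := cpair β (R.simple j) with hm
      have hw : wrefl (R.simple j) β = ∑ i, ((c i : ℝ) - (if i = j then m else 0)) • R.simple i := by
        unfold wrefl
        rw [hc]
        simp only [sub_smul, Finset.sum_sub_distrib, ite_smul, zero_smul,
          Finset.sum_ite_eq', Finset.mem_univ, if_pos]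
        rw [← hc]
      have heq : ∑ i, ((c i : ℝ) - (if i = j then m else 0)) • R.simple i
          = ∑ i, (-(d i : ℝ)) • R.simple i := by
        rw [← hw, hd]
        simp only [neg_smul, ← Finset.sum_neg_distrib]
      have := congrFun (R.coeff_eq heq) k
      simp only [if_neg hkj, sub_zero] at this
      have h1 := Nat.cast_nonneg (α := ℝ) (c k)
      have h2 := Nat.cast_nonneg (α := ℝ) (d k)
      have : (c k : ℝ) = 0 := by linarith
      exact hck (by exact_mod_cast this)
  · intro heq
    have hβ : β = -R.simple j := by
      have h2 := congrArg (wrefl (R.simple j)) heq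
      rw [wrefl_wrefl] at h2
      rw [h2, wrefl_apply_self _ (R.simple_ne_zero j)]
    have hneg : R.IsNeg β := hβ ▸ R.isNeg_neg (R.isPos_simple j)
    exact R.not_pos_neg ⟨hβr, c, hc⟩ hneg

lemma eq_simple_of_wrefl_neg {γ : E} {j : Fin ℓ} (hp : R.IsPos γ)
    (hn : R.IsNeg (wrefl (R.simple j) γ)) : γ = R.simple j := by
  by_contra hne
  exact R.not_pos_neg (R.isPos_wrefl_simple j hp hne).1 hn

end RootSystemData
namespace RootSystemData
open Finset
variable {ℓ : ℕ} (R : RootSystemData ℓ E)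

def sfold (L : List (Fin ℓ)) (x : E) : E :=
  L.foldr (fun j y => wrefl (R.simple j) y) x

@[simp] lemma sfold_nil (x : E) : R.sfold [] x = x := rfl

@[simp] lemma sfold_cons (j : Fin ℓ) (L : List (Fin ℓ)) (x : E) :
    R.sfold (j :: L) x = wrefl (R.simple j) (R.sfold L x) := rfl

lemma sfold_append (L M : List (Fin ℓ)) (x : E) :
    R.sfold (L ++ M) x = R.sfold L (R.sfold M x) := by
  unfold sfold
  rw [List.foldr_append]

lemma sfold_inner (L : List (Fin ℓ)) (x y : E) :
    ⟪R.sfold L x, R.sfold L y⟫ = ⟪x, y⟫ := by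
  induction L with
  | nil => rfl
  | cons j M ih => rw [sfold_cons, sfold_cons, inner_wrefl_wrefl, ih]

lemma sfold_cpair (L : List (Fin ℓ)) (x y : E) :
    cpair (R.sfold L x) (R.sfold L y) = cpair x y := by
  unfold cpair; rw [sfold_inner, sfold_inner]

lemma sfold_reverse_sfold (L : List (Fin ℓ)) (x : E) :
    R.sfold L.reverse (R.sfold L x) = x := by
  induction L generalizing x with
  | nil => rfl
  | cons j M ih =>
    rw [sfold_cons, List.reverse_cons, sfold_append]
    simp only [sfold_cons, sfold_nil]
    rw [wrefl_wrefl, ih]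

lemma sfold_sfold_reverse (L : List (Fin ℓ)) (x : E) :
    R.sfold L (R.sfold L.reverse x) = x := by
  have := R.sfold_reverse_sfold L.reverse x
  rwa [List.reverse_reverse] at this

lemma sfold_root (L : List (Fin ℓ)) {β : E} (h : β ∈ R.roots) :
    R.sfold L β ∈ R.roots := by
  induction L with
  | nil => exact h
  | cons j M ih => exact R.reflect_mem _ (R.simple_mem j) _ ih

lemma sfold_wrefl (L : List (Fin ℓ)) (β x : E) :
    R.sfold L (wrefl β x) = wrefl (R.sfold L β) (R.sfold L x) := by
  induction L with
  | nil => rfl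
  | cons j M ih => rw [sfold_cons, ih, wrefl_conj, sfold_cons, sfold_cons]

lemma sfold_add (L : List (Fin ℓ)) (x y : E) :
    R.sfold L (x + y) = R.sfold L x + R.sfold L y := by
  induction L with
  | nil => rfl
  | cons j M ih => rw [sfold_cons, ih, wrefl_add, sfold_cons, sfold_cons]

lemma sfold_smul (L : List (Fin ℓ)) (c : ℝ) (x : E) :
    R.sfold L (c • x) = c • R.sfold L x := by
  induction L with
  | nil => rfl
  | cons j M ih => rw [sfold_cons, ih, wrefl_smul, sfold_cons]

lemma sfold_zero (L : List (Fin ℓ)) : R.sfold L (0 : E) = 0 := by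
  induction L with
  | nil => rfl
  | cons j M ih => rw [sfold_cons, ih, wrefl_zero_right]

lemma sfold_sum {ι : Type*} (L : List (Fin ℓ)) (s : Finset ι) (f : ι → E) :
    R.sfold L (∑ i ∈ s, f i) = ∑ i ∈ s, R.sfold L (f i) := by
  classical
  induction s using Finset.induction_on with
  | empty => simp [R.sfold_zero]
  | insert _ _ hns ih =>
    rw [Finset.sum_insert hns, Finset.sum_insert hns, R.sfold_add, ih]

lemma cpair_wrefl_right (a x α : E) :
    cpair (wrefl a x) α = cpair x (wrefl a α) := by
  calc cpair (wrefl a x) α = cpair (wrefl a x) (wrefl a (wrefl a α)) := by rw [wrefl_wrefl]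
    _ = cpair x (wrefl a α) := cpair_wrefl_wrefl _ _ _

lemma sfold_integral (L : List (Fin ℓ)) {x : E} (h : R.IsIntegral x) :
    R.IsIntegral (R.sfold L x) := by
  induction L with
  | nil => exact h
  | cons j M ih =>
    intro α hα
    rw [sfold_cons, cpair_wrefl_right]
    exact ih _ (R.reflect_mem _ (R.simple_mem j) _ hα)

lemma sfold_inj (L : List (Fin ℓ)) {x y : E} (h : R.sfold L x = R.sfold L y) : x = y := by
  have := congrArg (R.sfold L.reverse) h
  rwa [R.sfold_reverse_sfold, R.sfold_reverse_sfold] at this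

end RootSystemData
namespace RootSystemData
open Finset
variable {ℓ : ℕ} (R : RootSystemData ℓ E)

lemma exchange : ∀ (L : List (Fin ℓ)) (β : E), R.IsPos β → R.IsNeg (R.sfold L β) →
    ∃ L' : List (Fin ℓ), L'.length + 1 = L.length ∧
      ∀ x, R.sfold L (wrefl β x) = R.sfold L' x := by
  intro L
  induction L with
  | nil =>
    intro β hp hn
    exact absurd hn (fun hn => R.not_pos_neg hp (by simpa using hn))
  | cons i M ih =>
    intro β hp hn
    have hβr := hp.1
    have hMβ : R.sfold M β ∈ R.roots := R.sfold_root M hβr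
    rcases R.pos_or_neg hMβ with hP | hN
    · have hsim : R.sfold M β = R.simple i :=
        R.eq_simple_of_wrefl_neg hP (by rw [← sfold_cons]; exact hn)
      refine ⟨M, rfl, ?_⟩
      intro x
      rw [sfold_cons, R.sfold_wrefl M β x, hsim, wrefl_wrefl]
    · obtain ⟨M', hlen, hM'⟩ := ih β hp hN
      refine ⟨i :: M', by simpa using hlen, ?_⟩
      intro x
      rw [sfold_cons, hM' x, sfold_cons]

lemma pos_preserving_id : ∀ (k : ℕ) (L : List (Fin ℓ)), L.length ≤ k →
    (∀ γ, R.IsPos γ → R.IsPos (R.sfold L γ)) → ∀ x, R.sfold L x = x := by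
  intro k
  induction k with
  | zero =>
    intro L hL _ x
    have : L = [] := List.length_eq_zero_iff.mp (Nat.le_zero.mp hL)
    rw [this]; rfl
  | succ k ih =>
    intro L hL hpos x
    match L with
    | [] => rfl
    | i :: M =>
      have hγr : R.sfold M.reverse (R.simple i) ∈ R.roots :=
        R.sfold_root _ (R.simple_mem i)
      have himg : R.sfold (i :: M) (R.sfold M.reverse (R.simple i)) = -R.simple i := by
        rw [sfold_cons, R.sfold_sfold_reverse, wrefl_apply_self _ (R.simple_ne_zero i)]
      have hγneg : R.IsNeg (R.sfold M.reverse (R.simple i)) := by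
        rcases R.pos_or_neg hγr with hp | hn
        · exfalso
          have hh := hpos _ hp
          rw [himg] at hh
          exact R.not_pos_neg hh (R.isNeg_neg (R.isPos_simple i))
        · exact hn
      obtain ⟨N, hlen, hN⟩ := R.exchange M.reverse (R.simple i) (R.isPos_simple i) hγneg
      have hkey : ∀ z, R.sfold N (R.sfold (i :: M) z) = z := by
        intro z
        have h2 : wrefl (R.simple i) (R.sfold (i :: M) z) = R.sfold M z := by
          rw [sfold_cons, wrefl_wrefl]
        have h1 := hN (R.sfold (i :: M) z)
        rw [h2, R.sfold_reverse_sfold] at h1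
        exact h1.symm
      have hLrev : ∀ z, R.sfold (i :: M) z = R.sfold N.reverse z := by
        intro z
        apply R.sfold_inj N
        rw [hkey z, R.sfold_sfold_reverse]
      have hlen' : N.reverse.length ≤ k := by
        have h1 : M.reverse.length = M.length := List.length_reverse
        have h2 : N.reverse.length = N.length := List.length_reverse
        have h3 : (i :: M).length = M.length + 1 := rfl
        omega
      have hpres' : ∀ γ, R.IsPos γ → R.IsPos (R.sfold N.reverse γ) := by
        intro γ hγ
        rw [← hLrev γ]
        exact hpos γ hγ
      rw [hLrev x]
      exact ih N.reverse hlen' hpres' x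

lemma inner_nonneg_of_cpair_nonneg {x : E} {j : Fin ℓ} (h : 0 ≤ cpair x (R.simple j)) :
    0 ≤ ⟪x, R.simple j⟫ := by
  have hA := R.inner_simple_self_pos j
  unfold cpair at h
  rw [div_nonneg_iff] at h
  rcases h with ⟨h1, -⟩ | ⟨-, h2⟩
  · linarith
  · linarith

lemma chamber_eq : ∀ (k : ℕ) (L : List (Fin ℓ)) (lam mu : E), L.length ≤ k →
    (∀ j, 0 ≤ cpair lam (R.simple j)) → (∀ j, 0 ≤ cpair mu (R.simple j)) →
    R.sfold L lam = mu → lam = mu := by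
  intro k
  induction k with
  | zero =>
    intro L lam mu hL _ _ heq
    have : L = [] := List.length_eq_zero_iff.mp (Nat.le_zero.mp hL)
    rw [this] at heq
    simpa using heq
  | succ k ih =>
    intro L lam mu hL hlam hmu heq
    by_cases hneg : ∃ j, R.IsNeg (R.sfold L (R.simple j))
    · obtain ⟨j, hj⟩ := hneg
      have h1 : ⟪lam, R.simple j⟫ = ⟪mu, R.sfold L (R.simple j)⟫ := by
        have h := R.sfold_inner L lam (R.simple j)
        rw [heq] at h
        exact h.symm
      have h2 : ⟪mu, R.sfold L (R.simple j)⟫ ≤ 0 := by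
        obtain ⟨-, c, hc⟩ := hj
        rw [hc, inner_neg_right]
        have hsum : 0 ≤ ⟪mu, ∑ i, (c i : ℝ) • R.simple i⟫ := by
          rw [inner_sum]
          apply Finset.sum_nonneg
          intro i _
          rw [real_inner_smul_right]
          have := R.inner_nonneg_of_cpair_nonneg (hmu i)
          positivity
        linarith
      have h3 : 0 ≤ ⟪lam, R.simple j⟫ := R.inner_nonneg_of_cpair_nonneg (hlam j)
      have h4 : ⟪lam, R.simple j⟫ = 0 := le_antisymm (h1 ▸ h2) h3
      have h5 : wrefl (R.simple j) lam = lam := by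
        unfold wrefl cpair
        rw [h4]
        norm_num
      obtain ⟨L', hlen, hL'⟩ := R.exchange L (R.simple j) (R.isPos_simple j) hj
      have heq' : R.sfold L' lam = mu := by rw [← hL' lam, h5, heq]
      exact ih L' lam mu (by omega) hlam hmu heq'
    · push_neg at hneg
      have hposj : ∀ j, R.IsPos (R.sfold L (R.simple j)) := fun j =>
        (R.pos_or_neg (R.sfold_root L (R.simple_mem j))).resolve_right (hneg j)
      choose d hd using fun j => (hposj j).2
      have hpres : ∀ γ, R.IsPos γ → R.IsPos (R.sfold L γ) := by
        intro γ hγ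
        obtain ⟨hγr, c, hc⟩ := hγ
        refine ⟨R.sfold_root L hγr, fun k => ∑ i, c i * d i k, ?_⟩
        rw [hc, R.sfold_sum]
        have hterm : ∀ i : Fin ℓ, R.sfold L ((c i : ℝ) • R.simple i)
            = ∑ k, (((c i * d i k : ℕ)) : ℝ) • R.simple k := by
          intro i
          rw [R.sfold_smul, hd i, Finset.smul_sum]
          apply Finset.sum_congr rfl
          intro k _
          rw [smul_smul]
          push_cast
          ring_nf
        rw [Finset.sum_congr rfl (fun i _ => hterm i), Finset.sum_comm]
        apply Finset.sum_congr rfl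
        intro k _
        rw [← Finset.sum_smul]
        congr 1
        push_cast
        rfl
      have hid := R.pos_preserving_id (k+1) L hL hpres lam
      rw [hid] at heq
      exact heq

end RootSystemData
namespace RootSystemData
open Finset
variable {ℓ : ℕ} (R : RootSystemData ℓ E)

lemma refl_word_pos : ∀ (h : ℕ) (β : E) (c : Fin ℓ → ℕ), β ∈ R.roots →
    β = ∑ i, (c i : ℝ) • R.simple i → (∑ i, c i) ≤ h →
    ∃ L : List (Fin ℓ), ∀ x, wrefl β x = R.sfold L x := by
  intro h
  induction h with
  | zero =>
    intro β c hβr hc hh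
    exfalso
    have hz : ∀ i, c i = 0 := by
      intro i
      have := Nat.le_zero.mp hh
      exact Finset.sum_eq_zero_iff.mp this i (mem_univ i)
    apply R.root_ne_zero β hβr
    rw [hc]
    apply Finset.sum_eq_zero
    intro i _
    rw [hz i]
    simp
  | succ h ih =>
    intro β c hβr hc hh
    by_cases hsimp : ∃ j, β = R.simple j
    · obtain ⟨j, hj⟩ := hsimp
      exact ⟨[j], fun x => by rw [hj]; rfl⟩
    · push_neg at hsimp
      have hββ : 0 < ⟪β, β⟫ := inner_self_pos'' (R.root_ne_zero β hβr)
      have hexists : ∃ j, 0 < (c j : ℝ) * ⟪R.simple j, β⟫ := by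
        by_contra hno
        push_neg at hno
        have hexp : ⟪β, β⟫ = ∑ i, (c i:ℝ) * ⟪R.simple i, β⟫ := by
          nth_rewrite 1 [hc]
          rw [sum_inner]
          apply Finset.sum_congr rfl
          intro i _
          rw [real_inner_smul_left]
        have hle : ⟪β, β⟫ ≤ 0 := by
          rw [hexp]
          exact Finset.sum_nonpos (fun i _ => hno i)
        linarith
      obtain ⟨j, hj⟩ := hexists
      have hcj : (0:ℝ) < (c j : ℝ) := by
        have hnn := Nat.cast_nonneg (α := ℝ) (c j)
        rcases eq_or_lt_of_le hnn with h' | h'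
        · rw [← h'] at hj; simp at hj
        · exact h'
      have hinner : 0 < ⟪R.simple j, β⟫ := by
        by_contra h'
        push_neg at h'
        nlinarith
      obtain ⟨m, hm⟩ := R.cpair_int (R.simple j) (R.simple_mem j) β hβr
      have hAj := R.inner_simple_self_pos j
      have hmpos : (0:ℝ) < (m : ℝ) := by
        rw [← hm]
        unfold cpair
        rw [real_inner_comm]
        exact div_pos (by linarith) hAj
      have hm1 : (1:ℝ) ≤ (m:ℝ) := by
        have : (1:ℤ) ≤ m := by exact_mod_cast hmpos
        exact_mod_cast this
      have hβ'pos : R.IsPos (wrefl (R.simple j) β) :=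
        (R.isPos_wrefl_simple j ⟨hβr, c, hc⟩ (hsimp j)).1
      obtain ⟨hβ'r, d, hd⟩ := hβ'pos
      have hw : wrefl (R.simple j) β
          = ∑ i, ((c i : ℝ) - if i = j then (m:ℝ) else 0) • R.simple i := by
        simp only [sub_smul, Finset.sum_sub_distrib, ite_smul, zero_smul,
          Finset.sum_ite_eq', Finset.mem_univ, if_pos]
        rw [← hc]
        unfold wrefl
        rw [hm]
      have hco := congrFun (R.coeff_eq (hd.symm.trans hw))
      -- height of d
      have hsum : (∑ i, (d i:ℝ)) = (∑ i, (c i:ℝ)) - (m:ℝ) := by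
        have hco' : ∀ i ∈ Finset.univ, (d i:ℝ)
            = (c i:ℝ) - (if i = j then (m:ℝ) else 0) := fun i _ => hco i
        rw [Finset.sum_congr rfl hco', Finset.sum_sub_distrib]
        congr 1
        rw [Finset.sum_ite_eq' Finset.univ j (fun _ => (m:ℝ))]
        simp
      have hhd : (∑ i, d i) ≤ h := by
        have h1 : ((∑ i, d i : ℕ) : ℝ) = ∑ i, (d i : ℝ) := by push_cast; rfl
        have h2 : ((∑ i, c i : ℕ) : ℝ) = ∑ i, (c i : ℝ) := by push_cast; rfl
        have h3 : ((∑ i, c i : ℕ) : ℝ) ≤ (h+1 : ℕ) := by exact_mod_cast hh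
        have h4 : ((∑ i, d i : ℕ) : ℝ) ≤ (h : ℕ) := by
          rw [h1, hsum, ← h2]
          push_cast
          push_cast at h3
          linarith
        exact_mod_cast h4
      obtain ⟨L, hL⟩ := ih (wrefl (R.simple j) β) d hβ'r hd hhd
      refine ⟨j :: (L ++ [j]), fun x => ?_⟩
      conv_rhs => rw [sfold_cons, R.sfold_append]
      rw [show R.sfold [j] x = wrefl (R.simple j) x from rfl, ← hL,
        wrefl_conj (R.simple j) (wrefl (R.simple j) β) (wrefl (R.simple j) x),
        wrefl_wrefl, wrefl_wrefl]

lemma refl_word {β : E} (hβ : β ∈ R.roots) : ∃ L, ∀ x, wrefl β x = R.sfold L x := by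
  rcases R.pos_or_neg hβ with ⟨-, c, hc⟩ | ⟨-, c, hc⟩
  · exact R.refl_word_pos (∑ i, c i) β c hβ hc le_rfl
  · have hβ'r : -β ∈ R.roots := R.neg_mem hβ
    obtain ⟨L, hL⟩ := R.refl_word_pos (∑ i, c i) (-β) c hβ'r (by rw [hc, neg_neg]) le_rfl
    refine ⟨L, fun x => ?_⟩
    rw [← wrefl_neg β x]
    exact hL x

lemma orbit_sfold {x y : E} (h : R.InWeylOrbit x y) : ∃ L, y = R.sfold L x := by
  obtain ⟨l, hl, hy⟩ := h
  subst hy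
  induction l with
  | nil => exact ⟨[], rfl⟩
  | cons a t iht =>
    obtain ⟨L0, hL0⟩ := iht (fun α hα => hl α (List.mem_cons_of_mem a hα))
    obtain ⟨La, hLa⟩ := R.refl_word (hl a List.mem_cons_self)
    refine ⟨La ++ L0, ?_⟩
    rw [List.foldr_cons, hL0, hLa, R.sfold_append]

end RootSystemData
namespace RootSystemData
open Finset
variable {ℓ : ℕ} (R : RootSystemData ℓ E)

open Classical in
/-- The set of positive roots, as a finset. -/
noncomputable def Pfin : Finset E :=
  R.roots.filter (fun β => ∃ c : Fin ℓ → ℕ, β = ∑ i, (c i : ℝ) • R.simple i)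

lemma mem_Pfin {β : E} : β ∈ R.Pfin ↔ R.IsPos β := by
  classical
  unfold Pfin IsPos
  rw [Finset.mem_filter]

/-- Half sum of positive roots. -/
noncomputable def halfsum : E := (2:ℝ)⁻¹ • ∑ β ∈ R.Pfin, β

lemma sum_Pfin_wrefl (j : Fin ℓ) :
    ∑ β ∈ R.Pfin, wrefl (R.simple j) β = (∑ β ∈ R.Pfin, β) - (2:ℝ) • R.simple j := by
  classical
  have hmem : R.simple j ∈ R.Pfin := R.mem_Pfin.mpr (R.isPos_simple j)
  rw [← Finset.add_sum_erase _ _ hmem, ← Finset.add_sum_erase _ (fun β => β) hmem]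
  have herase : ∑ β ∈ R.Pfin.erase (R.simple j), wrefl (R.simple j) β
      = ∑ β ∈ R.Pfin.erase (R.simple j), β := by
    apply Finset.sum_nbij' (fun β => wrefl (R.simple j) β) (fun β => wrefl (R.simple j) β)
    · intro β hβ
      obtain ⟨hβne, hβP⟩ := Finset.mem_erase.mp hβ
      have := R.isPos_wrefl_simple j (R.mem_Pfin.mp hβP) hβne
      exact Finset.mem_erase.mpr ⟨this.2, R.mem_Pfin.mpr this.1⟩
    · intro β hβ
      obtain ⟨hβne, hβP⟩ := Finset.mem_erase.mp hβ
      have := R.isPos_wrefl_simple j (R.mem_Pfin.mp hβP) hβne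
      exact Finset.mem_erase.mpr ⟨this.2, R.mem_Pfin.mpr this.1⟩
    · intro β _; exact wrefl_wrefl _ _
    · intro β _; exact wrefl_wrefl _ _
    · intro β _; rfl
  rw [herase, wrefl_apply_self _ (R.simple_ne_zero j), two_smul]
  abel

lemma wrefl_halfsum (j : Fin ℓ) :
    wrefl (R.simple j) R.halfsum = R.halfsum - R.simple j := by
  unfold halfsum
  have h1 : wrefl (R.simple j) ((2:ℝ)⁻¹ • ∑ β ∈ R.Pfin, β)
      = (2:ℝ)⁻¹ • ∑ β ∈ R.Pfin, wrefl (R.simple j) β := by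
    rw [wrefl_smul]
    congr 1
    have := R.sfold_sum [j] R.Pfin (fun β => β)
    simpa using this
  rw [h1, R.sum_Pfin_wrefl, smul_sub, smul_smul]
  norm_num

lemma cpair_halfsum (j : Fin ℓ) : cpair R.halfsum (R.simple j) = 1 := by
  have h := R.wrefl_halfsum j
  unfold wrefl at h
  have h2 : cpair R.halfsum (R.simple j) • R.simple j = R.simple j := by
    have h' := congrArg (fun z => R.halfsum - z) h
    simpa using h
  have h3 : (cpair R.halfsum (R.simple j) - 1) • R.simple j = 0 := by
    rw [sub_smul, one_smul, h2, sub_self]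
  rcases smul_eq_zero.mp h3 with h4 | h4
  · linarith [sub_eq_zero.mp (by linarith [h4] : cpair R.halfsum (R.simple j) - 1 = 0)]
  · exact absurd h4 (R.simple_ne_zero j)

lemma inner_halfsum (j : Fin ℓ) :
    ⟪R.halfsum, R.simple j⟫ = ⟪R.simple j, R.simple j⟫ / 2 := by
  have h := R.cpair_halfsum j
  unfold cpair at h
  have hA := R.inner_simple_self_pos j
  field_simp at h
  linarith

lemma sfold_norm (L : List (Fin ℓ)) (x : E) : ‖R.sfold L x‖ = ‖x‖ := by
  have h := R.sfold_inner L x x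
  rw [real_inner_self_eq_norm_mul_norm, real_inner_self_eq_norm_mul_norm] at h
  nlinarith [norm_nonneg (R.sfold L x), norm_nonneg x]

end RootSystemData

namespace RootSystemData
open Finset
variable {ℓ : ℕ} (R : RootSystemData ℓ E)

noncomputable def delta (hl : (Finset.univ : Finset (Fin ℓ)).Nonempty) : ℝ :=
  Finset.univ.inf' hl (fun j => ⟪R.simple j, R.simple j⟫ / 2)

lemma delta_pos (hl : (Finset.univ : Finset (Fin ℓ)).Nonempty) : 0 < R.delta hl := by
  unfold delta
  rw [Finset.lt_inf'_iff]
  intro j _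
  have := R.inner_simple_self_pos j
  linarith

lemma delta_le (hl : (Finset.univ : Finset (Fin ℓ)).Nonempty) (j : Fin ℓ) :
    R.delta hl ≤ ⟪R.simple j, R.simple j⟫ / 2 :=
  Finset.inf'_le _ (mem_univ j)

lemma ascend (hl : (Finset.univ : Finset (Fin ℓ)).Nonempty) (lam : E)
    (hint : R.IsIntegral lam) :
    ∀ (K : ℕ) (L : List (Fin ℓ)),
      ‖R.halfsum‖ * ‖lam‖ - ⟪R.halfsum, R.sfold L lam⟫ ≤ K * R.delta hl →
      ∃ L' : List (Fin ℓ), (∀ j, 0 ≤ cpair (R.sfold L' lam) (R.simple j)) ∧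
        ∃ c : Fin ℓ → ℝ, (∀ i, 0 ≤ c i) ∧
          R.sfold L' lam - R.sfold L lam = ∑ i, c i • R.simple i := by
  intro K
  induction K with
  | zero =>
    intro L hb
    by_cases hx : ∀ j, 0 ≤ cpair (R.sfold L lam) (R.simple j)
    · refine ⟨L, hx, fun _ => 0, fun _ => le_rfl, by simp⟩
    · exfalso
      push_neg at hx
      obtain ⟨j, hj⟩ := hx
      set x := R.sfold L lam with hxdef
      obtain ⟨m, hm⟩ := R.sfold_integral L hint (R.simple j) (R.simple_mem j)
      have hm1 : (m:ℝ) ≤ -1 := by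
        have h0 : (m:ℝ) < 0 := hm ▸ hj
        have h1 : m < 0 := by exact_mod_cast h0
        have h2 : m ≤ -1 := by omega
        exact_mod_cast h2
      have hvj : ⟪R.halfsum, R.simple j⟫ = ⟪R.simple j, R.simple j⟫/2 := R.inner_halfsum j
      have hx' : R.sfold (j :: L) lam = x - (m:ℝ) • R.simple j := by
        rw [sfold_cons, ← hxdef]
        unfold wrefl
        rw [hm]
      have hinc : ⟪R.halfsum, R.sfold (j :: L) lam⟫
          ≥ ⟪R.halfsum, x⟫ + R.delta hl := by
        rw [hx', inner_sub_right, real_inner_smul_right, hvj]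
        have hd := R.delta_le hl j
        have hA := R.inner_simple_self_pos j
        nlinarith
      have hCS : ⟪R.halfsum, R.sfold (j :: L) lam⟫ ≤ ‖R.halfsum‖ * ‖lam‖ := by
        calc ⟪R.halfsum, R.sfold (j :: L) lam⟫ ≤ ‖R.halfsum‖ * ‖R.sfold (j :: L) lam‖ :=
              real_inner_le_norm _ _
          _ = ‖R.halfsum‖ * ‖lam‖ := by rw [R.sfold_norm]
      have hδ := R.delta_pos hl
      simp only [Nat.cast_zero, zero_mul] at hb
      linarith
  | succ K ih =>
    intro L hb
    by_cases hx : ∀ j, 0 ≤ cpair (R.sfold L lam) (R.simple j)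
    · refine ⟨L, hx, fun _ => 0, fun _ => le_rfl, by simp⟩
    · push_neg at hx
      obtain ⟨j, hj⟩ := hx
      set x := R.sfold L lam with hxdef
      obtain ⟨m, hm⟩ := R.sfold_integral L hint (R.simple j) (R.simple_mem j)
      have hm1 : (m:ℝ) ≤ -1 := by
        have h0 : (m:ℝ) < 0 := hm ▸ hj
        have h1 : m < 0 := by exact_mod_cast h0
        have h2 : m ≤ -1 := by omega
        exact_mod_cast h2
      have hvj : ⟪R.halfsum, R.simple j⟫ = ⟪R.simple j, R.simple j⟫/2 := R.inner_halfsum j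
      have hx' : R.sfold (j :: L) lam = x - (m:ℝ) • R.simple j := by
        rw [sfold_cons, ← hxdef]
        unfold wrefl
        rw [hm]
      have hinc : ⟪R.halfsum, R.sfold (j :: L) lam⟫
          ≥ ⟪R.halfsum, x⟫ + R.delta hl := by
        rw [hx', inner_sub_right, real_inner_smul_right, hvj]
        have hd := R.delta_le hl j
        have hA := R.inner_simple_self_pos j
        nlinarith
      have hb' : ‖R.halfsum‖ * ‖lam‖ - ⟪R.halfsum, R.sfold (j :: L) lam⟫
          ≤ K * R.delta hl := by
        push_cast at hb ⊢
        linarith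
      obtain ⟨L', hcham, c, hcnn, hsum⟩ := ih (j :: L) hb'
      refine ⟨L', hcham, fun i => c i + (if i = j then -(m:ℝ) else 0), ?_, ?_⟩
      · intro i
        have := hcnn i
        simp only []
        by_cases hij : i = j
        · rw [if_pos hij]; linarith
        · rw [if_neg hij]; linarith
      · have hstep : R.sfold (j :: L) lam - x = (-(m:ℝ)) • R.simple j := by
          rw [hx']; rw [neg_smul]; abel
        have : R.sfold L' lam - x
            = (R.sfold L' lam - R.sfold (j :: L) lam) + (R.sfold (j :: L) lam - x) := by abel
        rw [this, hsum, hstep]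
        rw [Finset.sum_congr rfl (fun i (_ : i ∈ univ) => add_smul (c i) _ (R.simple i))]
        rw [Finset.sum_add_distrib]
        congr 1
        simp only [ite_smul, zero_smul, Finset.sum_ite_eq', Finset.mem_univ, if_pos]

lemma dominant_sub_orbit (lam y : E) (hdom : R.IsDominant lam) (hw : R.InWeylOrbit lam y)
    (hl : (Finset.univ : Finset (Fin ℓ)).Nonempty) :
    ∃ c : Fin ℓ → ℝ, (∀ i, 0 ≤ c i) ∧ lam - y = ∑ i, c i • R.simple i := by
  obtain ⟨L, hy⟩ := R.orbit_sfold hw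
  have hδ := R.delta_pos hl
  obtain ⟨K, hK⟩ := exists_nat_ge ((2 * ‖R.halfsum‖ * ‖lam‖) / R.delta hl)
  have hKd : 2 * ‖R.halfsum‖ * ‖lam‖ ≤ K * R.delta hl := by
    rw [div_le_iff₀ hδ] at hK
    linarith
  have hbound : ‖R.halfsum‖ * ‖lam‖ - ⟪R.halfsum, R.sfold L lam⟫ ≤ K * R.delta hl := by
    have h1 : -⟪R.halfsum, R.sfold L lam⟫ ≤ ‖R.halfsum‖ * ‖R.sfold L lam‖ := by
      have := abs_real_inner_le_norm R.halfsum (R.sfold L lam)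
      have := neg_abs_le ⟪R.halfsum, R.sfold L lam⟫
      linarith
    rw [R.sfold_norm] at h1
    linarith
  obtain ⟨L', hcham, c, hcnn, hsum⟩ := R.ascend hl lam hdom.1 K L hbound
  have hzlam : lam = R.sfold L' lam := by
    exact R.chamber_eq L'.length L' lam (R.sfold L' lam) le_rfl hdom.2 hcham rfl
  refine ⟨c, hcnn, ?_⟩
  rw [hy, ← hsum, ← hzlam]

end RootSystemData
variable {ℓ : ℕ}

/-- If `β = λ - wλ ≠ 0` with `λ` dominant and `w` in the Weyl group, and
`γ` is a simple root outside the support of `β` adjacent to a simple root `γ'`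
in the support, then the `ω_γ`-coefficient of `β` (that is, `⟨β, γ∨⟩`) is
negative. -/
theorem statement2 (R : RootSystemData ℓ E) (lam y : E)
    (hlam : R.IsDominant lam) (hw : R.InWeylOrbit lam y)
    (n : Fin ℓ → ℤ) (hb : lam - y = ∑ i, (n i : ℝ) • R.simple i)
    (hne : lam - y ≠ 0)
    (γ γ' : Fin ℓ) (hγ : n γ = 0) (hγ' : n γ' ≠ 0)
    (hadj : ⟪R.simple γ, R.simple γ'⟫ ≠ 0) :
    cpair (lam - y) (R.simple γ) < 0 := by
  have hl : (Finset.univ : Finset (Fin ℓ)).Nonempty := ⟨γ, Finset.mem_univ γ⟩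
  obtain ⟨c, hcnn, hcs⟩ := R.dominant_sub_orbit lam y hlam hw hl
  have hceq : (fun i => ((n i : ℝ))) = c := R.coeff_eq (by rw [← hb, ← hcs])
  have hnn : ∀ i, (0:ℝ) ≤ (n i : ℝ) := fun i => (congrFun hceq i) ▸ hcnn i
  have hexp : cpair (lam - y) (R.simple γ)
      = ∑ i, (n i : ℝ) * cpair (R.simple i) (R.simple γ) := by
    rw [hb]
    unfold cpair
    rw [sum_inner, Finset.mul_sum, Finset.sum_div]
    apply Finset.sum_congr rfl
    intro i _
    rw [real_inner_smul_left]
    ring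
  have hγγ' : γ' ≠ γ := fun h => hγ' (h ▸ hγ)
  have hterm : ∀ i ∈ Finset.univ, (n i : ℝ) * cpair (R.simple i) (R.simple γ) ≤ (fun _ : Fin ℓ => (0:ℝ)) i := by
    intro i _
    by_cases hij : i = γ
    · rw [hij, hγ]
      simp
    · exact mul_nonpos_iff.mpr (Or.inl ⟨hnn i, R.cpair_simple_nonpos hij⟩)
  have hstrict : ∃ i ∈ Finset.univ, (n i : ℝ) * cpair (R.simple i) (R.simple γ) < (fun _ : Fin ℓ => (0:ℝ)) i := by
    refine ⟨γ', Finset.mem_univ γ', ?_⟩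
    have hpos : 0 < (n γ' : ℝ) := by
      rcases lt_or_eq_of_le (hnn γ') with h | h
      · exact h
      · exact absurd (by exact_mod_cast h.symm) hγ'
    have hneg : cpair (R.simple γ') (R.simple γ) < 0 := by
      apply R.cpair_simple_neg hγγ'
      rw [real_inner_comm]
      exact hadj
    exact mul_neg_of_pos_of_neg hpos hneg
  have hsum := Finset.sum_lt_sum hterm hstrict
  rw [hexp]
  simpa using hsum
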